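/- Let θ ∈ (0,1], ε_q > 0, and let σ ⊂ ℝ³ be a set such that for every x ∈ σ and every ε̂ ∈ (0, θ) there exists r_{x,ε̂} ∈ (0, ε̂/5) with μ_x(r_{x,ε̂}) ≥ (ε_q/2) r_{x,ε̂}^{2δ}, where μ_x(r) := ∫_{T-r²}^{T} ∫_{B(x,r)} F dx ds for a fixed nonnegative function F ∈ L¹(ℝ³ × (T-θ², T)) and δ ∈ (0, 1/2]. Then H^{2δ}(σ) ≤ (2·5^{2δ}/ε_q) ∫_{T-ε̂²}^{T} ∫_{ℝ³} F dx ds for every ε̂ ∈ (0,θ), and consequently H^{2δ}(σ) = 0. -/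

import Mathlib

open MeasureTheory
open scoped ENNReal

local notation "X" => EuclideanSpace ℝ (Fin 3)

theorem stmt_9 (θ εq δ T : ℝ) (hθ : 0 < θ) (hθ' : θ ≤ 1) (hεq : 0 < εq)
    (hδ : 0 < δ) (hδ' : δ ≤ 1/2)
    (F : EuclideanSpace ℝ (Fin 3) × ℝ → ℝ) (hF : ∀ z, 0 ≤ F z)
    (hFint : IntegrableOn F ((Set.univ : Set (EuclideanSpace ℝ (Fin 3))) ×ˢ
      Set.Ioo (T - θ^2) T) volume)
    (σ : Set (EuclideanSpace ℝ (Fin 3)))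
    (hσ : ∀ x ∈ σ, ∀ ehat : ℝ, 0 < ehat → ehat < θ →
      ∃ r : ℝ, 0 < r ∧ r < ehat/5 ∧
        (εq/2) * r ^ (2*δ) ≤
          ∫ z in (Metric.ball x r ×ˢ Set.Ioo (T - r^2) T), F z) :
    (∀ ehat : ℝ, 0 < ehat → ehat < θ →
      μH[2*δ] σ ≤ ENNReal.ofReal ((2 * 5 ^ (2*δ) / εq) *
        ∫ z in ((Set.univ : Set (EuclideanSpace ℝ (Fin 3))) ×ˢ
          Set.Ioo (T - ehat^2) T), F z)) ∧
    μH[2*δ] σ = 0 := by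
  classical
  have h2δpos : (0:ℝ) < 2*δ := by linarith
  -- scales tending to zero
  set e : ℕ → ℝ := fun n => θ / (2*(n+1)) with he_def
  have hepos : ∀ n, 0 < e n := fun n => by positivity
  have helt : ∀ n, e n < θ := by
    intro n
    have h1 : (1:ℝ) < 2*((n:ℝ)+1) := by
      have : (0:ℝ) ≤ (n:ℝ) := Nat.cast_nonneg n
      linarith
    exact div_lt_self hθ h1
  have heθ : ∀ n, e n ≤ θ := fun n => (helt n).le
  have hetend : Filter.Tendsto e Filter.atTop (nhds 0) := by
    have h1 : Filter.Tendsto (fun n : ℕ => (θ/2) * (1/((n:ℝ)+1))) Filter.atTop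
        (nhds ((θ/2) * 0)) :=
      tendsto_one_div_add_atTop_nhds_zero_nat.const_mul _
    rw [mul_zero] at h1
    exact h1.congr (fun n => by
      rw [he_def]
      have hne : ((n:ℝ)+1) ≠ 0 := by positivity
      field_simp)
  -- choose radii
  have hRex : ∀ n : ℕ, ∀ x : X, ∃ r : ℝ, x ∈ σ →
      0 < r ∧ r < e n / 5 ∧
      (εq/2) * r ^ (2*δ) ≤ ∫ z in (Metric.ball x r ×ˢ Set.Ioo (T - r^2) T), F z := by
    intro n x
    by_cases h : x ∈ σ
    · obtain ⟨r, h1, h2, h3⟩ := hσ x h (e n) (hepos n) (helt n)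
      exact ⟨r, fun _ => ⟨h1, h2, h3⟩⟩
    · exact ⟨1, fun h' => absurd h' h⟩
  choose R hR using hRex
  -- Vitali covering
  have hvit : ∀ n : ℕ, ∃ u ⊆ σ,
      (u.PairwiseDisjoint fun a => Metric.closedBall a (R n a)) ∧
      ∀ a ∈ σ, ∃ b ∈ u, Metric.closedBall a (R n a) ⊆ Metric.closedBall b (5 * R n b) := by
    intro n
    exact Vitali.exists_disjoint_subfamily_covering_enlargement_closedBall σ id (R n)
      (e n / 5) (fun a ha => ((hR n a ha).2.1).le) 5 (by norm_num)
  choose u hu hdisj hcov using hvit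
  have hRpos : ∀ n, ∀ a ∈ σ, 0 < R n a := fun n a ha => (hR n a ha).1
  have hcnt : ∀ n, (u n).Countable := by
    intro n
    refine Set.PairwiseDisjoint.countable_of_isOpen
      (s := fun a => Metric.ball a (R n a)) ((hdisj n).mono ?_) (fun a _ => Metric.isOpen_ball) ?_
    · intro a; exact Metric.ball_subset_closedBall
    · intro a ha
      exact Metric.nonempty_ball.2 (hRpos n a (hu n ha))
  haveI : ∀ n, Countable ↥(u n) := fun n => (hcnt n).to_subtype
  -- nonneg density and target sets
  set g : X × ℝ → ℝ≥0∞ := fun z => ENNReal.ofReal (F z) with hg_def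
  set K : ℝ≥0∞ := ENNReal.ofReal (2 * (10:ℝ) ^ (2*δ) / εq) with hK_def
  have hKne : K ≠ ⊤ := ENNReal.ofReal_ne_top
  set A : ℕ → Set (X × ℝ) := fun n =>
    (Set.univ : Set X) ×ˢ Set.Ioo (T - (e n)^2) T with hA_def
  set Aθ : Set (X × ℝ) := (Set.univ : Set X) ×ˢ Set.Ioo (T - θ^2) T with hAθ_def
  have hAsub : ∀ n, A n ⊆ Aθ := by
    intro n
    refine Set.prod_mono subset_rfl (Set.Ioo_subset_Ioo ?_ le_rfl)
    nlinarith [hepos n, heθ n]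
  -- diameter bound for the enlarged balls
  have hdiam10 : ∀ (n : ℕ) (i : ↥(u n)),
      EMetric.diam (Metric.closedBall (i : X) (5 * R n i)) ≤
        ENNReal.ofReal (10 * R n i) := by
    intro n i
    apply EMetric.diam_le
    intro x hx y hy
    rw [Metric.mem_closedBall] at hx hy
    rw [edist_dist]
    apply ENNReal.ofReal_le_ofReal
    have h1 := dist_triangle x ((i : X)) y
    have h2 : dist ((i : X)) y = dist y ((i : X)) := dist_comm _ _
    nlinarith [hx, hy, h1, h2, dist_comm x ((i : X)) ▸ hx]
  -- main summation bound
  have hmainbound : ∀ n : ℕ,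
      (∑' i : ↥(u n), EMetric.diam (Metric.closedBall (i : X) (5 * R n i)) ^ (2*δ))
        ≤ K * ∫⁻ z in A n, g z := by
    intro n
    set s : ↥(u n) → Set (X × ℝ) := fun i =>
      Metric.ball (i : X) (R n i) ×ˢ Set.Ioo (T - (R n i)^2) T with hs_def
    have hσi : ∀ i : ↥(u n), (i : X) ∈ σ := fun i => hu n i.2
    have hRipos : ∀ i : ↥(u n), 0 < R n i := fun i => hRpos n i (hσi i)
    have hRismall : ∀ i : ↥(u n), R n i < e n / 5 := fun i => (hR n i (hσi i)).2.1
    have hRie : ∀ i : ↥(u n), R n i < e n := by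
      intro i
      have := hRismall i
      have := hepos n
      linarith
    have hsub : ∀ i : ↥(u n), s i ⊆ A n := by
      intro i
      refine Set.prod_mono (Set.subset_univ _) (Set.Ioo_subset_Ioo ?_ le_rfl)
      nlinarith [hRipos i, hRie i, hepos n]
    have hsubθ : ∀ i : ↥(u n), s i ⊆ Aθ := fun i => (hsub i).trans (hAsub n)
    have hmeas : ∀ i : ↥(u n), MeasurableSet (s i) :=
      fun i => (Metric.isOpen_ball.measurableSet).prod measurableSet_Ioo
    have hpdisj : Pairwise (Function.onFun Disjoint s) := by
      intro i j hij
      show Disjoint (s i) (s j)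
      have hballs : Disjoint (Metric.closedBall (i : X) (R n i))
          (Metric.closedBall (j : X) (R n j)) :=
        hdisj n i.2 j.2 (fun h => hij (Subtype.ext h))
      have hballs' : Disjoint (Metric.ball (i : X) (R n i))
          (Metric.ball (j : X) (R n j)) :=
        hballs.mono Metric.ball_subset_closedBall Metric.ball_subset_closedBall
      rw [Set.disjoint_left] at hballs' ⊢
      intro z hz hz'
      exact hballs' hz.1 hz'.1
    have hterm : ∀ i : ↥(u n),
        EMetric.diam (Metric.closedBall (i : X) (5 * R n i)) ^ (2*δ)
          ≤ K * ∫⁻ z in s i, g z := by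
      intro i
      set ρ := R n i with hρ_def
      have hρpos : 0 < ρ := hRipos i
      have hint : (εq/2) * ρ ^ (2*δ) ≤ ∫ z in s i, F z := (hR n i (hσi i)).2.2
      have hinteg : IntegrableOn F (s i) volume := hFint.mono_set (hsubθ i)
      have hIpos : 0 ≤ ∫ z in s i, F z := integral_nonneg (fun z => hF z)
      have h1 : EMetric.diam (Metric.closedBall (i : X) (5 * ρ)) ^ (2*δ) ≤
          ENNReal.ofReal ((10 * ρ) ^ (2*δ)) := by
        rw [← ENNReal.ofReal_rpow_of_nonneg (by positivity) h2δpos.le]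
        exact ENNReal.rpow_le_rpow (hdiam10 n i) h2δpos.le
      have hρ2δ : ρ ^ (2*δ) ≤ (2/εq) * ∫ z in s i, F z := by
        have hc : (0:ℝ) < 2/εq := by positivity
        have h := mul_le_mul_of_nonneg_left hint hc.le
        calc ρ ^ (2*δ) = (2/εq) * ((εq/2) * ρ ^ (2*δ)) := by field_simp
        _ ≤ (2/εq) * ∫ z in s i, F z := h
      have h2 : (10 * ρ) ^ (2*δ) ≤ (2 * (10:ℝ) ^ (2*δ) / εq) * ∫ z in s i, F z := by
        rw [Real.mul_rpow (by norm_num) hρpos.le]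
        calc (10:ℝ) ^ (2*δ) * ρ ^ (2*δ)
            ≤ (10:ℝ) ^ (2*δ) * ((2/εq) * ∫ z in s i, F z) := by
              apply mul_le_mul_of_nonneg_left hρ2δ
              positivity
        _ = (2 * (10:ℝ) ^ (2*δ) / εq) * ∫ z in s i, F z := by ring
      have h3 : ENNReal.ofReal ((2 * (10:ℝ) ^ (2*δ) / εq) * ∫ z in s i, F z)
          = K * ENNReal.ofReal (∫ z in s i, F z) := by
        rw [hK_def, ← ENNReal.ofReal_mul (by positivity)]
      have h4 : ENNReal.ofReal (∫ z in s i, F z) = ∫⁻ z in s i, g z :=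
        ofReal_integral_eq_lintegral_ofReal hinteg
          (Filter.Eventually.of_forall (fun z => hF z))
      calc EMetric.diam (Metric.closedBall (i : X) (5 * ρ)) ^ (2*δ)
          ≤ ENNReal.ofReal ((10 * ρ) ^ (2*δ)) := h1
      _ ≤ ENNReal.ofReal ((2 * (10:ℝ) ^ (2*δ) / εq) * ∫ z in s i, F z) :=
          ENNReal.ofReal_le_ofReal h2
      _ = K * ENNReal.ofReal (∫ z in s i, F z) := h3
      _ = K * ∫⁻ z in s i, g z := by rw [h4]
    calc (∑' i : ↥(u n), EMetric.diam (Metric.closedBall (i : X) (5 * R n i)) ^ (2*δ))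
        ≤ ∑' i : ↥(u n), K * ∫⁻ z in s i, g z := ENNReal.tsum_le_tsum hterm
    _ = K * ∑' i : ↥(u n), ∫⁻ z in s i, g z := ENNReal.tsum_mul_left
    _ = K * ∫⁻ z in ⋃ i : ↥(u n), s i, g z := by
        rw [lintegral_iUnion hmeas hpdisj]
    _ ≤ K * ∫⁻ z in A n, g z := by
        apply mul_le_mul_right
        exact lintegral_mono_set (Set.iUnion_subset hsub)
  -- apply the Hausdorff measure covering bound
  have hr : Filter.Tendsto (fun n => ENNReal.ofReal (2 * e n)) Filter.atTop (nhds 0) := by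
    have h0 : Filter.Tendsto (fun n => 2 * e n) Filter.atTop (nhds (2 * 0)) :=
      hetend.const_mul 2
    rw [mul_zero] at h0
    have h1 := ENNReal.tendsto_ofReal h0
    simpa using h1
  have ht : ∀ᶠ n in Filter.atTop, ∀ i : ↥(u n),
      EMetric.diam (Metric.closedBall (i : X) (5 * R n i)) ≤ ENNReal.ofReal (2 * e n) := by
    apply Filter.Eventually.of_forall
    intro n i
    refine (hdiam10 n i).trans (ENNReal.ofReal_le_ofReal ?_)
    have h1 : R n i < e n / 5 := (hR n i (hu n i.2)).2.1
    linarith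
  have hst : ∀ᶠ n in Filter.atTop,
      σ ⊆ ⋃ i : ↥(u n), Metric.closedBall (i : X) (5 * R n i) := by
    apply Filter.Eventually.of_forall
    intro n a ha
    obtain ⟨b, hb, hsubball⟩ := hcov n a ha
    exact Set.mem_iUnion.2 ⟨⟨b, hb⟩,
      hsubball (Metric.mem_closedBall_self (hRpos n a ha).le)⟩
  have hμH := Measure.hausdorffMeasure_le_liminf_tsum (2*δ) σ
    (fun n => ENNReal.ofReal (2 * e n)) hr
    (fun n (i : ↥(u n)) => Metric.closedBall (i : X) (5 * R n i)) ht hst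
  -- the right hand side tends to 0
  set ν : Measure (X × ℝ) := (volume.restrict Aθ).withDensity g with hν_def
  have hAmeas : ∀ n, MeasurableSet (A n) :=
    fun n => MeasurableSet.univ.prod measurableSet_Ioo
  have hνA : ∀ n, ν (A n) = ∫⁻ z in A n, g z := by
    intro n
    rw [hν_def, withDensity_apply _ (hAmeas n), Measure.restrict_restrict (hAmeas n),
      Set.inter_eq_self_of_subset_left (hAsub n)]
  have hAanti : Antitone A := by
    intro n m hnm
    refine Set.prod_mono subset_rfl (Set.Ioo_subset_Ioo ?_ le_rfl)
    have hee : e m ≤ e n := by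
      rw [he_def]
      apply div_le_div_of_nonneg_left hθ.le
      · positivity
      · have : (n:ℝ) ≤ (m:ℝ) := Nat.cast_le.2 hnm
        linarith
    nlinarith [hepos m, hepos n]
  have hfin : ν (A 0) ≠ ⊤ := by
    rw [hνA 0]
    refine ne_of_lt (lt_of_le_of_lt (lintegral_mono_set (hAsub 0)) ?_)
    have := hFint.lintegral_lt_top
    simpa [hg_def, Measure.restrict_restrict] using hFint.lintegral_lt_top
  have hiInter : (⋂ n, A n) = ∅ := by
    rw [Set.eq_empty_iff_forall_notMem]
    intro z hz
    have hz1 : z.2 < T := by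
      have := Set.mem_iInter.1 hz 0
      exact this.2.2
    set c := T - z.2 with hc_def
    have hcpos : 0 < c := by simp [hc_def]; linarith
    have hsq : Filter.Tendsto (fun n => (e n)^2) Filter.atTop (nhds 0) := by
      have := hetend.mul hetend
      simpa [sq] using this
    obtain ⟨n, hn⟩ := (hsq.eventually_lt_const hcpos).exists
    have := (Set.mem_iInter.1 hz n).2.1
    have this : T - e n ^ 2 < z.2 := this
    -- T - e n ^ 2 < z.2 means c < e n ^2
    rw [hc_def] at hn
    linarith
  have hνtend : Filter.Tendsto (fun n => ν (A n)) Filter.atTop (nhds 0) := by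
    have h0 := tendsto_measure_iInter_atTop (μ := ν)
      (fun n => (hAmeas n).nullMeasurableSet) hAanti ⟨0, hfin⟩
    rw [hiInter] at h0
    simpa [Function.comp_def] using h0
  have hKtend : Filter.Tendsto (fun n => K * ν (A n)) Filter.atTop (nhds 0) := by
    have := ENNReal.Tendsto.const_mul hνtend (Or.inr hKne)
    simpa using this
  have hzero : μH[2*δ] σ = 0 := by
    refine le_antisymm ?_ zero_le
    refine hμH.trans ?_
    have hle : Filter.liminf (fun n => ∑' i : ↥(u n),
        EMetric.diam (Metric.closedBall (i : X) (5 * R n i)) ^ (2*δ)) Filter.atTop ≤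
        Filter.liminf (fun n => K * ν (A n)) Filter.atTop := by
      apply Filter.liminf_le_liminf
      · apply Filter.Eventually.of_forall
        intro n
        rw [hνA n]
        exact hmainbound n
      · exact Filter.isBoundedUnder_of ⟨0, fun _ => zero_le⟩
      · exact Filter.isCoboundedUnder_ge_of_le Filter.atTop
          (f := fun n => K * ν (A n)) (x := ⊤) (fun _ => le_top)
    calc Filter.liminf (fun n => ∑' i : ↥(u n),
          EMetric.diam (Metric.closedBall (i : X) (5 * R n i)) ^ (2*δ)) Filter.atTop
        ≤ Filter.liminf (fun n => K * ν (A n)) Filter.atTop := hle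
    _ = 0 := hKtend.liminf_eq
  refine ⟨fun ehat _ _ => ?_, hzero⟩
  rw [hzero]
  exact zero_le
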